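/- For any group G, the category of G-sets (functors from the one-object groupoid SingleObj G to Type) is grouplike: for every small site (D,K) and every pair of functors P, Q : (SingleObj G ⥤ Type) ⥤ Sheaf K (Type) preserving finite limits and small colimits, every natural transformation P ⟶ Q is an isomorphism. -/

import Mathlib

universe u

open CategoryTheory Limits

/-- A category `𝒞` is grouplike if for every small site `(D, K)` and every pair of
functors `P Q : 𝒞 ⥤ Sheaf K (Type u)` preserving finite limits and small colimits, every
natural transformation `P ⟶ Q` is an isomorphism. -/
def Grouplike (𝒞 : Type*) [Category 𝒞] : Prop :=
  ∀ (D : Type u) (_ : SmallCategory D) (K : GrothendieckTopology D)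
    (P Q : 𝒞 ⥤ Sheaf K (Type u)),
    Nonempty (PreservesFiniteLimits P) → Nonempty (PreservesColimitsOfSize.{u, u} P) →
    Nonempty (PreservesFiniteLimits Q) → Nonempty (PreservesColimitsOfSize.{u, u} Q) →
    ∀ τ : P ⟶ Q, IsIso τ

namespace Statement17Aux

open CategoryTheory.SingleObj

/-- If `P` and `Q` preserve a colimit and `τ` is an isomorphism on the objects of the diagram,
then `τ` is an isomorphism on the colimit point. -/
lemma isIso_app_of_colimit {C : Type*} [Category C] {E : Type*} [Category E]
    {P Q : C ⥤ E} (τ : P ⟶ Q) {J : Type*} [Category J] {F : J ⥤ C}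
    {c : Cocone F} (hc : IsColimit c)
    [PreservesColimitsOfShape J P] [PreservesColimitsOfShape J Q]
    (h : ∀ j, IsIso (τ.app (F.obj j))) : IsIso (τ.app c.pt) := by
  let w : F ⋙ P ≅ F ⋙ Q :=
    NatIso.ofComponents (fun j => @asIso _ _ _ _ _ (h j))
      (fun f => by simp only [Functor.comp_map, asIso_hom]; exact τ.naturality (F.map f))
  have hP := isColimitOfPreserves P hc
  have hQ := isColimitOfPreserves Q hc
  have heq : τ.app c.pt = (IsColimit.coconePointsIsoOfNatIso hP hQ w).hom := by
    apply hP.hom_ext; intro j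
    rw [IsColimit.comp_coconePointsIsoOfNatIso_hom]
    simp only [w, Functor.mapCocone_ι_app, NatIso.ofComponents_hom_app, asIso_hom]
    exact τ.naturality (c.ι.app j)
  rw [heq]; infer_instance

lemma tExt {X Y : Type u} (f g : X ⟶ Y) (w : ∀ x, f x = g x) : f = g := by
  ext x; exact w x

variable (G : Type u) [Group G]

/-- The regular representation: `G` acting on itself by left multiplication. -/
@[reducible] def R : SingleObj G ⥤ Type u where
  obj _ := G
  map g := ↾fun (x : G) => (g : G) * x
  map_id _ := tExt _ _ fun x => one_mul x
  map_comp f g := tExt _ _ fun x => mul_assoc (g : G) (f : G) x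

/-- `G × G` with the diagonal action. -/
@[reducible] def R2 : SingleObj G ⥤ Type u where
  obj _ := G × G
  map g := ↾fun (z : G × G) => ((g : G) * z.1, (g : G) * z.2)
  map_id _ := tExt _ _ fun z => Prod.ext (one_mul z.1) (one_mul z.2)
  map_comp f g := tExt _ _ fun z => Prod.ext (mul_assoc (g : G) (f : G) z.1) (mul_assoc (g : G) (f : G) z.2)

/-- `G × G` acting only on the first factor. -/
@[reducible] def RΓ : SingleObj G ⥤ Type u where
  obj _ := G × G
  map g := ↾fun (z : G × G) => ((g : G) * z.1, z.2)
  map_id _ := tExt _ _ fun z => Prod.ext (one_mul z.1) rfl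
  map_comp f g := tExt _ _ fun z => Prod.ext (mul_assoc (g : G) (f : G) z.1) rfl

/-- The set `G` with the trivial action. -/
@[reducible] def Γob : SingleObj G ⥤ Type u where
  obj _ := G
  map _ := 𝟙 _

/-- The terminal `G`-set. -/
@[reducible] def T : SingleObj G ⥤ Type u where
  obj _ := PUnit
  map _ := 𝟙 _

def p1 : R2 G ⟶ R G where
  app _ := ↾fun (z : G × G) => z.1
  naturality _ _ _ := rfl

def p2 : R2 G ⟶ R G where
  app _ := ↾fun (z : G × G) => z.2
  naturality _ _ _ := rfl

def pΓ1 : RΓ G ⟶ R G where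
  app _ := ↾fun (z : G × G) => z.1
  naturality _ _ _ := rfl

def pΓ2 : RΓ G ⟶ Γob G where
  app _ := ↾fun (z : G × G) => z.2
  naturality _ _ _ := rfl

def φmor : R2 G ⟶ RΓ G where
  app _ := ↾fun (z : G × G) => (z.1, z.1⁻¹ * z.2)
  naturality _ _ g := tExt _ _ fun z =>
    Prod.ext rfl (by simp [R2, RΓ, mul_assoc])

def φinv : RΓ G ⟶ R2 G where
  app _ := ↾fun (z : G × G) => (z.1, z.1 * z.2)
  naturality _ _ g := tExt _ _ fun z => Prod.ext rfl (mul_assoc (g : G) z.1 z.2)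

def actm : RΓ G ⟶ R G where
  app _ := ↾fun (z : G × G) => z.1 * z.2
  naturality _ _ g := tExt _ _ fun z => mul_assoc (g : G) z.1 z.2

def Δmor : R G ⟶ R2 G where
  app _ := ↾fun (x : G) => ((x, x) : G × G)
  naturality _ _ _ := rfl

def eT : R G ⟶ T G where
  app _ := ↾fun _ => PUnit.unit
  naturality _ _ _ := rfl

def ιg (g : G) : T G ⟶ Γob G where
  app _ := ↾fun _ => g
  naturality _ _ _ := rfl

def ρg (g : G) : R G ⟶ R G where
  app _ := ↾fun (x : G) => x * g
  naturality _ _ h := tExt _ _ fun x => mul_assoc (h : G) x g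

lemma phi_p1 : φmor G ≫ pΓ1 G = p1 G := rfl

lemma phi_act : φmor G ≫ actm G = p2 G := by
  apply NatTrans.ext; funext u; refine tExt _ _ fun z => ?_
  show z.1 * (z.1⁻¹ * z.2) = z.2
  simp

lemma diag_delta : Δmor G ≫ (φmor G ≫ pΓ2 G) = eT G ≫ ιg G 1 := by
  apply NatTrans.ext; funext u; refine tExt _ _ fun x => ?_
  show x⁻¹ * x = 1
  simp

lemma diag_p1 : Δmor G ≫ p1 G = 𝟙 (R G) := rfl

lemma diag_p2 : Δmor G ≫ p2 G = 𝟙 (R G) := rfl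

instance : IsIso (φmor G) := by
  refine ⟨φinv G, ?_, ?_⟩
  · apply NatTrans.ext; funext u; refine tExt _ _ fun z => ?_
    show ((z.1 : G), z.1 * (z.1⁻¹ * z.2)) = z
    simp
  · apply NatTrans.ext; funext u; refine tExt _ _ fun z => ?_
    show ((z.1 : G), z.1⁻¹ * (z.1 * z.2)) = z
    simp

/-- Pairing into `R2`. -/
def liftR2 (s : BinaryFan (R G) (R G)) : s.pt ⟶ R2 G where
  app u := ↾fun z => (s.fst.app u z, s.snd.app u z)
  naturality u v g := tExt _ _ fun z =>
    Prod.ext (types_congr_hom (s.fst.naturality g) z) (types_congr_hom (s.snd.naturality g) z)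

/-- Pairing into `RΓ`. -/
def liftRΓ (s : BinaryFan (R G) (Γob G)) : s.pt ⟶ RΓ G where
  app u := ↾fun z => (s.fst.app u z, s.snd.app u z)
  naturality u v g := tExt _ _ fun z =>
    Prod.ext (types_congr_hom (s.fst.naturality g) z) (types_congr_hom (s.snd.naturality g) z)

/-- The binary fan exhibiting `R2` as the product `R × R`. -/
def hR2 : IsLimit (BinaryFan.mk (p1 G) (p2 G)) :=
  BinaryFan.isLimitMk (fun s => liftR2 G s)
    (fun s => rfl) (fun s => rfl)
    (fun s m h1 h2 => by
      apply NatTrans.ext; funext u; refine tExt _ _ fun z => ?_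
      exact Prod.ext (types_congr_hom (congr_fun (congr_arg NatTrans.app h1) u) z)
        (types_congr_hom (congr_fun (congr_arg NatTrans.app h2) u) z))

/-- The binary fan exhibiting `RΓ` as the product `R × Γ`. -/
def hRΓ : IsLimit (BinaryFan.mk (pΓ1 G) (pΓ2 G)) :=
  BinaryFan.isLimitMk (fun s => liftRΓ G s)
    (fun s => rfl) (fun s => rfl)
    (fun s m h1 h2 => by
      apply NatTrans.ext; funext u; refine tExt _ _ fun z => ?_
      exact Prod.ext (types_congr_hom (congr_fun (congr_arg NatTrans.app h1) u) z)
        (types_congr_hom (congr_fun (congr_arg NatTrans.app h2) u) z))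

/-- `T` is terminal. -/
def hT : IsTerminal (T G) :=
  IsTerminal.ofUniqueHom (fun X => { app := fun _ => ↾fun _ => PUnit.unit, naturality := fun _ _ _ => rfl })
    (fun X m => by apply NatTrans.ext; funext u; refine tExt _ _ fun z => ?_; rfl)

/-- `Γob` is the coproduct of `G` copies of the terminal object. -/
def hΓcofan : IsColimit (Cofan.mk (Γob G) (ιg G)) := by
  refine mkCofanColimit _
    (fun t => { app := fun u => ↾fun γ => (t.inj γ).app u PUnit.unit,
                naturality := fun u v g => tExt _ _ fun γ =>
                  types_congr_hom ((t.inj γ).naturality g) PUnit.unit })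
    (fun t j => rfl) ?_
  intro t m hm
  apply NatTrans.ext; funext u; refine tExt _ _ fun γ => ?_
  exact types_congr_hom (congr_fun (congr_arg NatTrans.app (hm γ)) u) PUnit.unit

lemma coeq_w : p1 G ≫ eT G = p2 G ≫ eT G := rfl

/-- `T` is the coequalizer of the two projections `R2 ⇉ R`. -/
def hcoeq : IsColimit (Cofork.ofπ (eT G) (coeq_w G)) := by
  refine Cofork.IsColimit.mk _
    (fun s => { app := fun u => ↾fun _ => s.π.app u (1 : G),
                naturality := fun u v g => tExt _ _ fun z => ?_ }) ?_ ?_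
  · -- s.π.app v 1 = s.pt.map g (s.π.app u 1)
    have h1 : s.π.app v ((R G).map g (1 : G)) = s.pt.map g (s.π.app u (1 : G)) :=
      types_congr_hom (s.π.naturality g) (1 : G)
    have h2 : s.π.app v ((p1 G).app v ((g * 1 : G), (1 : G)))
        = s.π.app v ((p2 G).app v ((g * 1 : G), (1 : G))) :=
      types_congr_hom (congr_fun (congr_arg NatTrans.app s.condition) v) ((g * 1 : G), (1 : G))
    exact (h2.symm.trans h1)
  · intro s
    apply NatTrans.ext; funext u; refine tExt _ _ fun h => ?_
    have h2 : s.π.app u ((p1 G).app u ((h : G), (1 : G)))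
        = s.π.app u ((p2 G).app u ((h : G), (1 : G))) :=
      types_congr_hom (congr_fun (congr_arg NatTrans.app s.condition) u) ((h : G), (1 : G))
    exact h2.symm
  · intro s m hm
    apply NatTrans.ext; funext u; refine tExt _ _ fun z => ?_
    exact types_congr_hom (congr_fun (congr_arg NatTrans.app hm) u) (1 : G)

variable {G}

/-- The index category for presenting a `G`-set `X` as a colimit of copies of `R`:
objects are elements of `X`, morphisms `x ⟶ y` are group elements `g` with `g • y = x`. -/
def Jc (X : SingleObj G ⥤ Type u) : Type u := X.obj (SingleObj.star G)

instance (X : SingleObj G ⥤ Type u) : Category.{u} (Jc X) where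
  Hom x y := {g : G // X.map (show SingleObj.star G ⟶ SingleObj.star G from g) y = x}
  id x := ⟨1, types_congr_hom (X.map_id _) x⟩
  comp {x y z} f g := ⟨f.1 * g.1, by
    have h := types_congr_hom (X.map_comp (show SingleObj.star G ⟶ SingleObj.star G from g.1)
      (show SingleObj.star G ⟶ SingleObj.star G from f.1)) z
    exact h.trans ((TypeCat.congr_arg (X.map (show SingleObj.star G ⟶ SingleObj.star G from f.1)) g.2).trans f.2)⟩
  id_comp f := Subtype.ext (one_mul _)
  comp_id f := Subtype.ext (mul_one _)
  assoc f g h := Subtype.ext (mul_assoc _ _ _)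

/-- The constant diagram of copies of `R` indexed by `Jc X`. -/
@[reducible] def FJ (X : SingleObj G ⥤ Type u) : Jc X ⥤ (SingleObj G ⥤ Type u) where
  obj _ := R G
  map f := ρg G f.1
  map_id x := by apply NatTrans.ext; funext u; refine tExt _ _ fun z => ?_; exact mul_one z
  map_comp f g := by apply NatTrans.ext; funext u; refine tExt _ _ fun z => ?_; exact (mul_assoc z f.1 g.1).symm

/-- The canonical cocone on `FJ X` with point `X`. -/
def ccX (X : SingleObj G ⥤ Type u) : Cocone (FJ X) where
  pt := X
  ι := {
    app := fun x => {
      app := fun u => ↾fun h => X.map (show SingleObj.star G ⟶ SingleObj.star G from h) x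
      naturality := fun u v g => tExt _ _ fun h =>
        types_congr_hom (X.map_comp (show SingleObj.star G ⟶ SingleObj.star G from h)
          (show SingleObj.star G ⟶ SingleObj.star G from g)) x }
    naturality := fun x y f => by
      apply NatTrans.ext; funext u; refine tExt _ _ fun h => ?_
      show X.map (show SingleObj.star G ⟶ SingleObj.star G from h * f.1) y = X.map _ x
      exact (types_congr_hom (X.map_comp (show SingleObj.star G ⟶ SingleObj.star G from f.1)
        (show SingleObj.star G ⟶ SingleObj.star G from h)) y).trans
        (TypeCat.congr_arg (X.map (show SingleObj.star G ⟶ SingleObj.star G from h)) f.2) }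

/-- The cocone `ccX X` is a colimit. -/
def hccX (X : SingleObj G ⥤ Type u) : IsColimit (ccX X) where
  desc s := {
    app := fun u => ↾fun x => (s.ι.app x).app u (1 : G)
    naturality := fun u v g => tExt _ _ fun x => by
      have h1 : s.ι.app (X.map g x) = ρg G g ≫ s.ι.app x := by
        have := s.ι.naturality (show (show Jc X from X.map g x) ⟶ x from ⟨g, rfl⟩)
        exact (Category.comp_id _).symm.trans this.symm
      have h2 : (s.ι.app x).app v ((R G).map g (1 : G)) = s.pt.map g ((s.ι.app x).app u (1 : G)) :=
        types_congr_hom ((s.ι.app x).naturality g) (1 : G)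
      calc (s.ι.app (X.map g x)).app v (1 : G)
          = (s.ι.app x).app v ((1 : G) * g) := by rw [h1]; rfl
        _ = (s.ι.app x).app v (g * 1 : G) := by rw [one_mul, mul_one]
        _ = s.pt.map g ((s.ι.app x).app u (1 : G)) := h2 }
  fac s x := by
    apply NatTrans.ext; funext u; refine tExt _ _ fun h => ?_
    have h1 : s.ι.app (X.map (show SingleObj.star G ⟶ SingleObj.star G from h) x)
        = ρg G h ≫ s.ι.app x := by
      have := s.ι.naturality (show (show Jc X from X.map (show SingleObj.star G ⟶ SingleObj.star G from h) x) ⟶ x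
        from ⟨h, rfl⟩)
      exact (Category.comp_id _).symm.trans this.symm
    show (s.ι.app (X.map (show SingleObj.star G ⟶ SingleObj.star G from h) x)).app u (1 : G)
      = (s.ι.app x).app u h
    rw [h1]
    show (s.ι.app x).app u ((1 : G) * h) = (s.ι.app x).app u h
    rw [one_mul]
  uniq s m hm := by
    apply NatTrans.ext; funext u; refine tExt _ _ fun x => ?_
    have h0 : X.map (show SingleObj.star G ⟶ SingleObj.star G from (1 : G)) x = x :=
      types_congr_hom (X.map_id _) x
    calc m.app u x = m.app u (((ccX X).ι.app x).app u (1 : G)) := by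
          show m.app u x = m.app u (X.map _ x); rw [h0]
      _ = (((ccX X).ι.app x) ≫ m).app u (1 : G) := rfl
      _ = (s.ι.app x).app u (1 : G) := by rw [hm x]

end Statement17Aux

open Statement17Aux

section EpiLemma

variable {D : Type u} [SmallCategory D] {K : GrothendieckTopology D}

/-- In a sheaf topos, if `A` admits an epimorphism to the terminal object, then the second
projection `A ⨯ B ⟶ B` is an epimorphism. -/
lemma epi_snd_of_epi_to_terminal {A B T' : Sheaf K (Type u)} (hT : IsTerminal T')
    (f : A ⟶ T') (hf : Epi f) : Epi (prod.snd : A ⨯ B ⟶ B) := by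
  haveI : PreservesLimitsOfSize.{0, 0} (sheafToPresheaf K (Type u)) :=
    preservesLimitsOfSize_shrink _
  rw [← Sheaf.isLocallySurjective_iff_epi] at hf ⊢
  haveI := hf
  constructor
  intro U s
  -- a section of the terminal sheaf over U
  have hTval : IsTerminal ((sheafToPresheaf K (Type u)).obj T') :=
    IsTerminal.isTerminalObj _ _ hT
  have hTd : IsTerminal (T'.val.obj (Opposite.op U)) :=
    IsTerminal.isTerminalObj ((evaluation Dᵒᵖ (Type u)).obj (Opposite.op U)) _ hTval
  have t0 : T'.val.obj (Opposite.op U) := hTd.from (PUnit : Type u) PUnit.unit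
  refine K.superset_covering ?_ (Presheaf.imageSieve_mem K f.hom t0)
  intro d' g hg
  obtain ⟨a, -⟩ := hg
  -- build an element of (A ⨯ B).val.obj (op d') with second component the restriction of s
  let Γf : Sheaf K (Type u) ⥤ Type u :=
    sheafToPresheaf K (Type u) ⋙ (evaluation Dᵒᵖ (Type u)).obj (Opposite.op d')
  haveI : PreservesLimitsOfSize.{0, 0} ((evaluation Dᵒᵖ (Type u)).obj (Opposite.op d')) :=
    preservesLimitsOfSize_shrink _
  haveI : PreservesLimitsOfSize.{0, 0} Γf := by
    unfold Γf; infer_instance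
  have hprod : IsLimit (BinaryFan.mk (Γf.map (prod.fst : A ⨯ B ⟶ A)) (Γf.map prod.snd)) :=
    isLimitMapConeBinaryFanEquiv Γf _ _ (isLimitOfPreserves Γf (prodIsProd A B))
  obtain ⟨ℓ, -, hℓ2⟩ := BinaryFan.IsLimit.lift' hprod
    (↾fun _ : (PUnit : Type u) => a) (↾fun _ => B.val.map g.op s)
  exact ⟨ℓ PUnit.unit, types_congr_hom hℓ2 PUnit.unit⟩

end EpiLemma

theorem statement17 (G : Type u) [Group G] :
    Grouplike.{u} (SingleObj G ⥤ Type u) := by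
  intro D _ K P Q hPL' hPC' hQL' hQC' τ
  obtain ⟨hPL⟩ := hPL'; obtain ⟨hPC⟩ := hPC'; obtain ⟨hQL⟩ := hQL'; obtain ⟨hQC⟩ := hQC'
  haveI := hPL; haveI := hPC; haveI := hQL; haveI := hQC
  haveI : PreservesColimitsOfSize.{0, 0} P := preservesSmallestColimits_of_preservesColimits P
  haveI : PreservesColimitsOfSize.{0, 0} Q := preservesSmallestColimits_of_preservesColimits Q
  -- terminal objects
  have hPT : IsTerminal (P.obj (T G)) := IsTerminal.isTerminalObj P _ (hT G)
  have hQT : IsTerminal (Q.obj (T G)) := IsTerminal.isTerminalObj Q _ (hT G)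
  -- τ is iso at the terminal object
  have iT : IsIso (τ.app (T G)) :=
    ⟨hPT.from (Q.obj (T G)), hPT.hom_ext _ _, hQT.hom_ext _ _⟩
  -- τ is iso at Γ
  have iΓ : IsIso (τ.app (Γob G)) :=
    isIso_app_of_colimit τ (hΓcofan G) (fun j => iT)
  -- product cones
  have hPR2 : IsLimit (BinaryFan.mk (P.map (p1 G)) (P.map (p2 G))) :=
    isLimitMapConeBinaryFanEquiv P _ _ (isLimitOfPreserves P (hR2 G))
  have hQR2 : IsLimit (BinaryFan.mk (Q.map (p1 G)) (Q.map (p2 G))) :=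
    isLimitMapConeBinaryFanEquiv Q _ _ (isLimitOfPreserves Q (hR2 G))
  have hPRΓ : IsLimit (BinaryFan.mk (P.map (pΓ1 G)) (P.map (pΓ2 G))) :=
    isLimitMapConeBinaryFanEquiv P _ _ (isLimitOfPreserves P (hRΓ G))
  have hQRΓ : IsLimit (BinaryFan.mk (Q.map (pΓ1 G)) (Q.map (pΓ2 G))) :=
    isLimitMapConeBinaryFanEquiv Q _ _ (isLimitOfPreserves Q (hRΓ G))
  haveI := iΓ
  -- Mono
  have mono_t : Mono (τ.app (R G)) := by
    constructor
    intro S u v huv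
    obtain ⟨w, hw1, hw2⟩ := BinaryFan.IsLimit.lift' hPR2 u v
    simp only [BinaryFan.mk_pt, pair_obj_left, pair_obj_right, BinaryFan.mk_fst, BinaryFan.mk_snd] at hw1 hw2
    -- Step A : w ≫ τ.app R2 = u ≫ τ.app R ≫ Q.map Δ
    have stepA : w ≫ τ.app (R2 G) = u ≫ τ.app (R G) ≫ Q.map (Δmor G) := by
      apply BinaryFan.IsLimit.hom_ext hQR2 <;>
        simp only [BinaryFan.mk_pt, pair_obj_left, pair_obj_right, BinaryFan.mk_fst, BinaryFan.mk_snd, Category.assoc]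
      · rw [← τ.naturality (p1 G), ← Category.assoc, hw1, ← Functor.map_comp, diag_p1,
          CategoryTheory.Functor.map_id, Category.comp_id]
      · rw [← τ.naturality (p2 G), ← Category.assoc, hw2, ← Functor.map_comp, diag_p2,
          CategoryTheory.Functor.map_id, Category.comp_id, huv]
    -- Step C : w ≫ P.map δ = u ≫ P.map (eT ≫ ι 1)
    have stepC : w ≫ P.map (φmor G ≫ pΓ2 G) = u ≫ P.map (eT G ≫ ιg G 1) := by
      have hB : w ≫ P.map (φmor G ≫ pΓ2 G) ≫ τ.app (Γob G)
          = u ≫ τ.app (R G) ≫ Q.map (eT G ≫ ιg G 1) := by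
        rw [τ.naturality (φmor G ≫ pΓ2 G)]
        rw [← Category.assoc, stepA]
        simp only [Category.assoc, ← Functor.map_comp]
        rw [diag_delta]
      have hnat : τ.app (R G) ≫ Q.map (eT G ≫ ιg G 1)
          = P.map (eT G ≫ ιg G 1) ≫ τ.app (Γob G) :=
        (τ.naturality (eT G ≫ ιg G 1)).symm
      rw [hnat] at hB
      exact (cancel_mono (τ.app (Γob G))).1 (by simpa [Category.assoc] using hB)
    -- conclude w = u ≫ P.map Δ using the product cone on RΓ and the iso φ
    have hwu : w ≫ P.map (φmor G) = (u ≫ P.map (Δmor G)) ≫ P.map (φmor G) := by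
      apply BinaryFan.IsLimit.hom_ext hPRΓ <;>
        simp only [BinaryFan.mk_pt, pair_obj_left, pair_obj_right, BinaryFan.mk_fst, BinaryFan.mk_snd, Category.assoc, ← Functor.map_comp]
      · rw [phi_p1, diag_p1, CategoryTheory.Functor.map_id, Category.comp_id, hw1]
      · rw [diag_delta]
        exact stepC
    haveI : IsIso (P.map (φmor G)) := inferInstance
    have hw : w = u ≫ P.map (Δmor G) := (cancel_mono (P.map (φmor G))).1 hwu
    rw [hw] at hw2
    rw [← hw2, Category.assoc, ← Functor.map_comp, diag_p2, CategoryTheory.Functor.map_id,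
      Category.comp_id]
  -- Epi
  have epi_Pe : Epi (P.map (eT G)) := by
    have hc2 := isColimitCoforkMapOfIsColimit P (coeq_w G) (hcoeq G)
    exact ⟨fun a b hab => Cofork.IsColimit.hom_ext hc2 (by simpa using hab)⟩
  have epi_snd : Epi (prod.snd : P.obj (R G) ⨯ Q.obj (R G) ⟶ Q.obj (R G)) :=
    epi_snd_of_epi_to_terminal hPT (P.map (eT G)) epi_Pe
  have epi_t : Epi (τ.app (R G)) := by
    obtain ⟨m, hm1, hm2⟩ := BinaryFan.IsLimit.lift' hQR2
      ((prod.fst : P.obj (R G) ⨯ Q.obj (R G) ⟶ P.obj (R G)) ≫ τ.app (R G)) prod.snd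
    simp only [BinaryFan.mk_pt, pair_obj_left, pair_obj_right, BinaryFan.mk_fst, BinaryFan.mk_snd] at hm1 hm2
    obtain ⟨ℓ, hℓ1, hℓ2⟩ := BinaryFan.IsLimit.lift' hPRΓ
      (prod.fst : P.obj (R G) ⨯ Q.obj (R G) ⟶ P.obj (R G))
      ((m ≫ Q.map (φmor G ≫ pΓ2 G)) ≫ inv (τ.app (Γob G)))
    simp only [BinaryFan.mk_pt, pair_obj_left, pair_obj_right, BinaryFan.mk_fst, BinaryFan.mk_snd] at hℓ1 hℓ2
    have claim1 : ℓ ≫ τ.app (RΓ G) = m ≫ Q.map (φmor G) := by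
      apply BinaryFan.IsLimit.hom_ext hQRΓ <;>
        simp only [BinaryFan.mk_pt, pair_obj_left, pair_obj_right, BinaryFan.mk_fst, BinaryFan.mk_snd, Category.assoc]
      · rw [← τ.naturality (pΓ1 G), ← Category.assoc, hℓ1, ← Functor.map_comp, phi_p1, hm1]
      · rw [← τ.naturality (pΓ2 G), ← Category.assoc, hℓ2, Category.assoc,
          IsIso.inv_hom_id, Category.comp_id, ← Functor.map_comp]
    have key : (ℓ ≫ P.map (actm G)) ≫ τ.app (R G) = prod.snd := by
      rw [Category.assoc, τ.naturality (actm G), ← Category.assoc, claim1,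
        Category.assoc, ← Functor.map_comp, phi_act, hm2]
    rw [← key] at epi_snd
    haveI := epi_snd
    exact epi_of_epi (ℓ ≫ P.map (actm G)) (τ.app (R G))
  haveI := mono_t; haveI := epi_t
  haveI : Balanced (Sheaf K (Type u)) := inferInstance
  have iR : IsIso (τ.app (R G)) := isIso_of_mono_of_epi _
  have hall : ∀ X : SingleObj G ⥤ Type u, IsIso (τ.app X) := by
    intro X
    exact isIso_app_of_colimit τ (hccX X) (fun j => iR)
  haveI := hall
  exact NatIso.isIso_of_isIso_app τ
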